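/- The polycyclic Pauli root group P = ⟨V_{k,3}, ρ_{12}⟩ is finite of order 2k², and is isomorphic to the wreath product C_k ≀ C_2 (i.e., (C_k × C_k) ⋊ C_2 with C_2 acting by swapping factors). -/

import Mathlib

open Matrix Complex

noncomputable def σ : Fin 3 → Matrix (Fin 2) (Fin 2) ℂ
  | 0 => !![0, 1; 1, 0]
  | 1 => !![0, -I; I, 0]
  | 2 => !![1, 0; 0, -1]

noncomputable def ω (k : ℕ) : ℂ := Complex.exp (2 * Real.pi * I / k)

noncomputable def V (k : ℕ) (a : Fin 3) : Matrix (Fin 2) (Fin 2) ℂ :=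
  (1 / 2 : ℂ) • ((1 + ω k) • (1 : Matrix (Fin 2) (Fin 2) ℂ) + (1 - ω k) • σ a)

noncomputable def ρ (a b : Fin 3) : Matrix (Fin 2) (Fin 2) ℂ :=
  ((Real.sqrt 2 : ℂ))⁻¹ • (σ a + σ b)

/-- The subgroup of invertible 2×2 complex matrices generated by the units
whose underlying matrices lie in `S`. -/
noncomputable def G (S : Set (Matrix (Fin 2) (Fin 2) ℂ)) :
    Subgroup (Matrix (Fin 2) (Fin 2) ℂ)ˣ :=
  Subgroup.closure {u : (Matrix (Fin 2) (Fin 2) ℂ)ˣ | (u : Matrix (Fin 2) (Fin 2) ℂ) ∈ S}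

/-- Levi-Civita symbol (on `Fin 3`; differences agree with the 1,2,3 convention). -/
def ε (a b c : Fin 3) : ℤ :=
  ((a : ℤ) - (b : ℤ)) * ((b : ℤ) - (c : ℤ)) * ((c : ℤ) - (a : ℤ)) / 2

/-- The swap action of `Equiv.Perm (Fin 2)` on `Fin 2 → Multiplicative (ZMod k)`,
making `(C_k × C_k) ⋊ C₂ = C_k ≀ C₂`. -/
def swapAut (k : ℕ) : Equiv.Perm (Fin 2) →* MulAut (Fin 2 → Multiplicative (ZMod k)) :=
  MonoidHom.mk'
    (fun e =>
      { Equiv.arrowCongr e (Equiv.refl (Multiplicative (ZMod k))) with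
        map_mul' := fun _ _ => rfl })
    (fun _ _ => by ext f x; rfl)

namespace Stmt12Aux

set_option linter.unusedSectionVars false

lemma perm_cases (e : Equiv.Perm (Fin 2)) : e = 1 ∨ e = Equiv.swap 0 1 := by
  revert e; decide

lemma perm_sq (e : Equiv.Perm (Fin 2)) : e * e = 1 := by revert e; decide

section KFixed

variable (k : ℕ) [NeZero k]

lemma hprim : IsPrimitiveRoot (ω k) k :=
  Complex.isPrimitiveRoot_exp k (NeZero.ne k)

lemma omega_pow_k : ω k ^ k = 1 := (hprim k).pow_eq_one

lemma omega_pow_mod (m : ℕ) : ω k ^ (m % k) = ω k ^ m := by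
  conv_rhs => rw [← Nat.div_add_mod m k]
  rw [pow_add, pow_mul, omega_pow_k, one_pow, one_mul]

noncomputable def c (a : ZMod k) : ℂ := ω k ^ a.val

lemma c_zero : c k 0 = 1 := by simp [c]

lemma c_add (a b : ZMod k) : c k (a + b) = c k a * c k b := by
  rw [c, c, c, ZMod.val_add, omega_pow_mod, pow_add]

lemma c_natCast (n : ℕ) : c k ((n : ZMod k)) = ω k ^ n := by
  rw [c, ZMod.val_natCast, omega_pow_mod]

lemma c_inj {a b : ZMod k} (h : c k a = c k b) : a = b :=
  ZMod.val_injective k ((hprim k).pow_inj (ZMod.val_lt a) (ZMod.val_lt b) h)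

noncomputable def Dm (f : Fin 2 → ZMod k) : Matrix (Fin 2) (Fin 2) ℂ :=
  Matrix.diagonal fun i => c k (f i)

noncomputable def Rm (e : Equiv.Perm (Fin 2)) : Matrix (Fin 2) (Fin 2) ℂ :=
  if e = 1 then 1 else ρ 0 1

lemma Dm_mul (f g : Fin 2 → ZMod k) : Dm k f * Dm k g = Dm k (f + g) := by
  rw [Dm, Dm, Dm, Matrix.diagonal_mul_diagonal]
  exact congrArg Matrix.diagonal (funext fun i => (c_add k (f i) (g i)).symm)

lemma Dm_zero : Dm k 0 = 1 := by
  rw [Dm]; simp [c_zero]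

lemma sqrt2_ne : ((Real.sqrt 2 : ℝ) : ℂ) ≠ 0 := by
  norm_cast; positivity

lemma sqrt2_sq : ((Real.sqrt 2 : ℝ) : ℂ) * ((Real.sqrt 2 : ℝ) : ℂ) = 2 := by
  norm_cast
  exact Real.mul_self_sqrt (by norm_num)

lemma rho_sq : ρ 0 1 * ρ 0 1 = 1 := by
  have h2 := sqrt2_sq
  have hn := sqrt2_ne
  ext i j
  fin_cases i <;> fin_cases j <;>
    simp [ρ, σ, Matrix.mul_apply, Fin.sum_univ_two, Matrix.one_apply] <;>
    field_simp <;> linear_combination (-1 : ℂ) * Complex.I_sq - h2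

lemma rho_mul_diag (d : Fin 2 → ℂ) :
    ρ 0 1 * Matrix.diagonal d = Matrix.diagonal (d ∘ Equiv.swap 0 1) * ρ 0 1 := by
  ext i j
  rw [Matrix.mul_diagonal, Matrix.diagonal_mul]
  fin_cases i <;> fin_cases j <;> simp [ρ, σ, Equiv.swap_apply_def] <;> ring

lemma Rm_one : Rm 1 = 1 := by simp [Rm]

lemma Rm_swap : Rm (Equiv.swap 0 1) = ρ 0 1 := by
  rw [Rm, if_neg (by decide)]

lemma Rm_mul (e s : Equiv.Perm (Fin 2)) : Rm e * Rm s = Rm (e * s) := by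
  rcases perm_cases e with he | he <;> rcases perm_cases s with hs | hs <;>
      subst he <;> subst hs <;>
    simp [Rm_one, Rm_swap, perm_sq, rho_sq]

lemma Rm_mul_Dm (e : Equiv.Perm (Fin 2)) (g : Fin 2 → ZMod k) :
    Rm e * Dm k g = Dm k (g ∘ e.symm) * Rm e := by
  rcases perm_cases e with he | he <;> subst he
  · rw [Rm_one, one_mul, mul_one]
    exact congrArg (Dm k) (funext fun i => rfl)
  · rw [Rm_swap, Dm, Dm, rho_mul_diag]
    rfl

noncomputable def M (f : Fin 2 → ZMod k) (e : Equiv.Perm (Fin 2)) :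
    Matrix (Fin 2) (Fin 2) ℂ := Dm k f * Rm e

lemma M_mul (f g : Fin 2 → ZMod k) (e s : Equiv.Perm (Fin 2)) :
    M k f e * M k g s = M k (f + g ∘ ⇑e.symm) (e * s) := by
  rw [M, M, M, mul_assoc, ← mul_assoc (Rm e), Rm_mul_Dm, mul_assoc, Rm_mul,
    ← mul_assoc, Dm_mul]

lemma M_one : M k 0 1 = 1 := by rw [M, Dm_zero, Rm_one, one_mul]

noncomputable def uM (f : Fin 2 → ZMod k) (e : Equiv.Perm (Fin 2)) :
    (Matrix (Fin 2) (Fin 2) ℂ)ˣ where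
  val := M k f e
  inv := M k (-(f ∘ ⇑e)) e⁻¹
  val_inv := by
    rw [M_mul]
    convert M_one k using 2
    · funext i; simp
    · group
  inv_val := by
    rw [M_mul]
    convert M_one k using 2
    · funext i; simp [Equiv.Perm.inv_def]
    · group

lemma uM_mul (f g : Fin 2 → ZMod k) (e s : Equiv.Perm (Fin 2)) :
    uM k f e * uM k g s = uM k (f + g ∘ ⇑e.symm) (e * s) :=
  Units.ext (M_mul k f g e s)

lemma uM_inv (f : Fin 2 → ZMod k) (e : Equiv.Perm (Fin 2)) :
    (uM k f e)⁻¹ = uM k (-(f ∘ ⇑e)) e⁻¹ := Units.ext rfl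

lemma uM_congr {f g : Fin 2 → ZMod k} {e s : Equiv.Perm (Fin 2)}
    (hf : f = g) (he : e = s) : uM k f e = uM k g s := by rw [hf, he]

lemma uM_one : uM k 0 1 = 1 := Units.ext (M_one k)

noncomputable def uD : (Fin 2 → Multiplicative (ZMod k)) →* (Matrix (Fin 2) (Fin 2) ℂ)ˣ :=
  MonoidHom.mk' (fun f => uM k (fun i => (f i).toAdd) 1) (by
    intro f g
    rw [uM_mul]
    exact uM_congr k (funext fun i => rfl) (one_mul 1).symm)

noncomputable def uR : Equiv.Perm (Fin 2) →* (Matrix (Fin 2) (Fin 2) ℂ)ˣ :=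
  MonoidHom.mk' (fun e => uM k 0 e) (by
    intro e s
    rw [uM_mul]
    exact uM_congr k (by funext i; simp) rfl)

lemma compat : ∀ e : Equiv.Perm (Fin 2),
    (uD k).comp (MulEquiv.toMonoidHom ((swapAut k) e)) =
      (MulEquiv.toMonoidHom (MulAut.conj ((uR k) e))).comp (uD k) := by
  intro e
  ext f : 1
  show uM k (fun i => (((swapAut k) e f) i).toAdd) 1
      = uM k 0 e * uM k (fun i => (f i).toAdd) 1 * (uM k 0 e)⁻¹
  rw [uM_inv, uM_mul, uM_mul]
  refine uM_congr k ?_ (by group)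
  funext i
  simp [swapAut, mul_one]
  rfl

noncomputable def Φ : SemidirectProduct (Fin 2 → Multiplicative (ZMod k)) (Equiv.Perm (Fin 2))
    (swapAut k) →* (Matrix (Fin 2) (Fin 2) ℂ)ˣ :=
  SemidirectProduct.lift (uD k) (uR k) (compat k)

end KFixed

end Stmt12Aux

namespace Stmt12Aux

section KFixed2

variable (k : ℕ) [NeZero k]

open SemidirectProduct

lemma Φ_inl (f : Fin 2 → Multiplicative (ZMod k)) :
    Φ k (SemidirectProduct.inl f) = uD k f :=
  SemidirectProduct.lift_inl _ _ _ f

lemma Φ_inr (e : Equiv.Perm (Fin 2)) :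
    Φ k (SemidirectProduct.inr e) = uR k e :=
  SemidirectProduct.lift_inr _ _ _ e

lemma Φ_apply (p : SemidirectProduct (Fin 2 → Multiplicative (ZMod k)) (Equiv.Perm (Fin 2))
    (swapAut k)) : Φ k p = uM k (fun i => ((p.left) i).toAdd) p.right := by
  conv_lhs => rw [← SemidirectProduct.inl_left_mul_inr_right p]
  rw [_root_.map_mul, Φ_inl, Φ_inr]
  show uM k _ 1 * uM k 0 _ = _
  rw [uM_mul]
  exact uM_congr k (funext fun i => by simp) (one_mul _)

lemma Φ_inj : Function.Injective (Φ k) := by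
  rw [injective_iff_map_eq_one]
  intro p hp
  rw [Φ_apply] at hp
  have hval : M k (fun i => ((p.left) i).toAdd) p.right = 1 := congrArg Units.val hp
  have hr : p.right = 1 := by
    rcases perm_cases p.right with h | h
    · exact h
    · exfalso
      rw [M, h, Rm_swap] at hval
      have h00 := congrFun (congrFun hval 0) 0
      simp [Dm, Matrix.diagonal_mul, ρ, σ, Matrix.one_apply, Matrix.smul_apply,
        Matrix.add_apply] at h00
  have hl : p.left = 1 := by
    funext i
    have : M k (fun i => ((p.left) i).toAdd) 1 = 1 := by rw [← hr]; exact hval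
    rw [M, Rm_one, mul_one, Dm] at this
    have hii := congrFun (congrFun this i) i
    rw [Matrix.diagonal_apply_eq, Matrix.one_apply_eq] at hii
    have h0 : c k ((p.left i).toAdd) = c k 0 := by rw [hii, c_zero]
    have := c_inj k h0
    simpa using this
  rw [← SemidirectProduct.inl_left_mul_inr_right p, hl, hr]
  simp

/-- delta functions -/
def dlt (i0 : Fin 2) : Fin 2 → Multiplicative (ZMod k) :=
  fun j => if j = i0 then Multiplicative.ofAdd (1 : ZMod k) else 1

lemma uD_dlt1_val : ((uD k (dlt k 1) : (Matrix (Fin 2) (Fin 2) ℂ)ˣ) : Matrix (Fin 2) (Fin 2) ℂ)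
    = V k 2 := by
  have hc : c k (1 : ZMod k) = ω k := by
    rw [← Nat.cast_one, c_natCast, pow_one]
  show M k (fun i => ((dlt k 1) i).toAdd) 1 = V k 2
  rw [M, Rm_one, mul_one, Dm]
  ext i j
  fin_cases i <;> fin_cases j <;>
    simp [dlt, V, σ, Matrix.one_apply, c_zero, hc, Matrix.smul_apply, Matrix.add_apply] <;>
    ring

lemma uR_swap_val : ((uR k (Equiv.swap 0 1) : (Matrix (Fin 2) (Fin 2) ℂ)ˣ) :
    Matrix (Fin 2) (Fin 2) ℂ) = ρ 0 1 := by
  show M k 0 (Equiv.swap 0 1) = ρ 0 1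
  rw [M, Dm_zero, one_mul, Rm_swap]

lemma uR_mem (e : Equiv.Perm (Fin 2)) : uR k e ∈ G {V k 2, ρ 0 1} := by
  rcases perm_cases e with h | h <;> subst h
  · rw [_root_.map_one]; exact one_mem _
  · exact Subgroup.subset_closure (by
      show _ ∈ ({V k 2, ρ 0 1} : Set _)
      rw [uR_swap_val]
      exact Or.inr rfl)

lemma conj_eq (e : Equiv.Perm (Fin 2)) (f : Fin 2 → Multiplicative (ZMod k)) :
    uD k ((swapAut k e) f) = uR k e * uD k f * (uR k e)⁻¹ := by
  have h := DFunLike.congr_fun (compat k e) f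
  simpa using h

lemma uV_mem : uD k (dlt k 1) ∈ G {V k 2, ρ 0 1} :=
  Subgroup.subset_closure (by
    show _ ∈ ({V k 2, ρ 0 1} : Set _)
    rw [uD_dlt1_val]
    exact Or.inl rfl)

lemma uD0_mem : uD k (dlt k 0) ∈ G {V k 2, ρ 0 1} := by
  have hd : dlt k 0 = (swapAut k (Equiv.swap 0 1)) (dlt k 1) := by
    funext j
    fin_cases j <;> simp [swapAut, dlt, Equiv.swap_apply_def] <;> rfl
  rw [hd, conj_eq]
  exact mul_mem (mul_mem (uR_mem k _) (uV_mem k)) (inv_mem (uR_mem k _))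

lemma key_pow (x : Multiplicative (ZMod k)) :
    Multiplicative.ofAdd (1 : ZMod k) ^ (x.toAdd).val = x := by
  rw [← ofAdd_nsmul, nsmul_eq_mul, mul_one]
  exact congrArg Multiplicative.ofAdd (ZMod.natCast_rightInverse x.toAdd)

lemma uD_mem (f : Fin 2 → Multiplicative (ZMod k)) : uD k f ∈ G {V k 2, ρ 0 1} := by
  have hdecomp : f = dlt k 0 ^ ((f 0).toAdd).val * dlt k 1 ^ ((f 1).toAdd).val := by
    funext j
    fin_cases j <;>
      simp only [Pi.mul_apply, Pi.pow_apply, dlt] <;>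
      simp [key_pow]
  rw [show f = _ from hdecomp, _root_.map_mul, map_pow, map_pow]
  exact mul_mem (pow_mem (uD0_mem k) _) (pow_mem (uV_mem k) _)

lemma range_eq : (Φ k).range = G {V k 2, ρ 0 1} := by
  apply le_antisymm
  · rintro x ⟨p, rfl⟩
    rw [← SemidirectProduct.inl_left_mul_inr_right p, _root_.map_mul, Φ_inl, Φ_inr]
    exact mul_mem (uD_mem k _) (uR_mem k _)
  · rw [G]
    rw [Subgroup.closure_le]
    rintro u hu
    rcases hu with h | h
    · exact ⟨SemidirectProduct.inl (dlt k 1), Units.ext (by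
        rw [Φ_inl, uD_dlt1_val]; exact h.symm)⟩
    · exact ⟨SemidirectProduct.inr (Equiv.swap 0 1), Units.ext (by
        rw [Φ_inr, uR_swap_val]; exact h.symm)⟩

end KFixed2

end Stmt12Aux

open Stmt12Aux in
theorem stmt12 (k : ℕ) (hk : 1 ≤ k) :
    Nat.card (G {V k 2, ρ 0 1}) = 2 * k ^ 2 ∧
    Nonempty ((G {V k 2, ρ 0 1}) ≃*
      SemidirectProduct (Fin 2 → Multiplicative (ZMod k)) (Equiv.Perm (Fin 2)) (swapAut k)) := by
  haveI : NeZero k := ⟨by omega⟩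
  have e1 : G {V k 2, ρ 0 1} ≃* (Φ k).range := MulEquiv.subgroupCongr (range_eq k).symm
  have e2 := MonoidHom.ofInjective (Φ_inj k)
  have e3 : G {V k 2, ρ 0 1} ≃*
      SemidirectProduct (Fin 2 → Multiplicative (ZMod k)) (Equiv.Perm (Fin 2)) (swapAut k) :=
    e1.trans e2.symm
  refine ⟨?_, ⟨e3⟩⟩
  rw [Nat.card_congr e3.toEquiv]
  have hW : Nat.card (SemidirectProduct (Fin 2 → Multiplicative (ZMod k)) (Equiv.Perm (Fin 2))
      (swapAut k)) = Nat.card ((Fin 2 → Multiplicative (ZMod k)) × Equiv.Perm (Fin 2)) :=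
    Nat.card_congr ⟨fun p => (p.left, p.right), fun q => ⟨q.1, q.2⟩, fun p => rfl, fun q => rfl⟩
  rw [hW, Nat.card_prod, Nat.card_fun]
  have h1 : Nat.card (Multiplicative (ZMod k)) = k := Nat.card_zmod k
  have h2 : Nat.card (Equiv.Perm (Fin 2)) = 2 := by
    rw [Nat.card_eq_fintype_card, Fintype.card_perm, Fintype.card_fin]
    rfl
  have h3 : Nat.card (Fin 2) = 2 := by simp
  rw [h1, h2, h3]
  ring
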